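/- Let p_1,...,p_n ∈ [0,1] and nonnegative weights p_1',...,p_n'. For each integer k: (Σ_i p_i'·p_i·f_k^{(i)})·(Σ_i p_i'·(1-p_i)·f_{k+1}^{(i)}) − (Σ_i p_i'·(1-p_i)·f_k^{(i)})·(Σ_i p_i'·p_i·f_{k+1}^{(i)}) = Σ_{i<j} p_i'·p_j'·(p_i − p_j)²·((f_k^{(i,j)})² − f_{k-1}^{(i,j)}·f_{k+1}^{(i,j)}), and this quantity is nonnegative. -/

import Mathlib

open Finset

/-- Probability mass function of a sum of independent Bernoulli random variables
indexed by the finite set `I`, with parameters `p i`. -/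
def bernoulliSumPMF (I : Finset ℕ) (p : ℕ → ℝ) (k : ℤ) : ℝ :=
  if 0 ≤ k then
    ∑ S ∈ I.powersetCard k.toNat, (∏ i ∈ S, p i) * (∏ i ∈ I \ S, (1 - p i))
  else 0

lemma bsp_empty (p : ℕ → ℝ) (k : ℤ) : bernoulliSumPMF ∅ p k = if k = 0 then 1 else 0 := by
  unfold bernoulliSumPMF
  rcases lt_trichotomy k 0 with hk|hk|hk
  · rw [if_neg (by omega), if_neg (by omega)]
  · subst hk; simp
  · rw [if_pos (by omega), if_neg (by omega)]
    have h1 : k.toNat = (k.toNat - 1) + 1 := by omega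
    rw [h1, powersetCard_eq_empty.mpr (by simp)]
    simp

lemma bsp_rec (I : Finset ℕ) (p : ℕ → ℝ) (a : ℕ) (ha : a ∉ I) (k : ℤ) :
    bernoulliSumPMF (insert a I) p k
      = p a * bernoulliSumPMF I p (k - 1) + (1 - p a) * bernoulliSumPMF I p k := by
  unfold bernoulliSumPMF
  rcases lt_trichotomy k 0 with hk | hk | hk
  · rw [if_neg (by omega), if_neg (by omega), if_neg (by omega)]; ring
  · subst hk
    rw [if_pos le_rfl, if_neg (by omega), if_pos le_rfl]
    simp only [Int.toNat_zero, powersetCard_zero, sum_singleton, prod_empty, sdiff_empty, one_mul]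
    rw [prod_insert ha]; ring
  · rw [if_pos (by omega), if_pos (by omega), if_pos (by omega)]
    have hk1 : k.toNat = (k-1).toNat + 1 := by omega
    have hk2 : (k-1).toNat + 1 = ((k-1).toNat).succ := rfl
    rw [hk1, hk2, powersetCard_succ_insert ha]
    have hdisj : Disjoint (powersetCard ((k-1).toNat).succ I)
        (image (insert a) (powersetCard (k-1).toNat I)) := by
      rw [disjoint_left]
      intro S hS hS'
      obtain ⟨T, hT, rfl⟩ := mem_image.mp hS'
      have := (mem_powersetCard.mp hS).1
      exact ha (this (mem_insert_self a T))
    rw [sum_union hdisj]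
    have h1 : ∀ S ∈ powersetCard ((k-1).toNat).succ I,
        (∏ i ∈ S, p i) * (∏ i ∈ insert a I \ S, (1 - p i))
          = (1 - p a) * ((∏ i ∈ S, p i) * (∏ i ∈ I \ S, (1 - p i))) := by
      intro S hS
      have hSI := (mem_powersetCard.mp hS).1
      have haS : a ∉ S := fun h => ha (hSI h)
      have : insert a I \ S = insert a (I \ S) := by
        ext x
        simp only [mem_sdiff, mem_insert]
        constructor
        · rintro ⟨hx1 | hx1, hx2⟩
          · exact Or.inl hx1
          · exact Or.inr ⟨hx1, hx2⟩
        · rintro (rfl | ⟨hx1, hx2⟩)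
          · exact ⟨Or.inl rfl, haS⟩
          · exact ⟨Or.inr hx1, hx2⟩
      rw [this, prod_insert (fun h => ha (mem_sdiff.mp h).1)]
      ring
    rw [sum_congr rfl h1, ← mul_sum]
    have hinj : Set.InjOn (insert a) (powersetCard (k-1).toNat I : Set (Finset ℕ)) := by
      intro S hS T hT hST
      have hSI := (mem_powersetCard.mp hS).1
      have hTI := (mem_powersetCard.mp hT).1
      have haS : a ∉ S := fun h => ha (hSI h)
      have haT : a ∉ T := fun h => ha (hTI h)
      rw [← erase_insert haS, hST, erase_insert haT]
    rw [sum_image hinj]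
    have h2 : ∀ S ∈ powersetCard (k-1).toNat I,
        (∏ i ∈ insert a S, p i) * (∏ i ∈ insert a I \ insert a S, (1 - p i))
          = p a * ((∏ i ∈ S, p i) * (∏ i ∈ I \ S, (1 - p i))) := by
      intro S hS
      have hSI := (mem_powersetCard.mp hS).1
      have haS : a ∉ S := fun h => ha (hSI h)
      have h3 : insert a I \ insert a S = I \ S := by
        ext x
        simp only [mem_sdiff, mem_insert, not_or]
        constructor
        · rintro ⟨hx1 | hx1, hx2, hx3⟩
          · exact absurd hx1 hx2
          · exact ⟨hx1, hx3⟩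
        · rintro ⟨hx1, hx3⟩
          exact ⟨Or.inr hx1, fun h => ha (h ▸ hx1), hx3⟩
      rw [h3, prod_insert haS]
      ring
    rw [sum_congr rfl h2, ← mul_sum]
    ring

def LCseq (g : ℤ → ℝ) : Prop :=
  (∀ k, 0 ≤ g k) ∧ ∀ k l : ℤ, k ≤ l → g (k-1) * g (l+1) ≤ g k * g l

lemma LCseq_delta : LCseq (fun k : ℤ => if k = 0 then (1:ℝ) else 0) := by
  constructor
  · intro k; dsimp only; split <;> norm_num
  · intro k l hkl
    dsimp only
    have h0 : (if k - 1 = 0 then (1:ℝ) else 0) * (if l + 1 = 0 then (1:ℝ) else 0) = 0 := by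
      split_ifs with h1 h2 <;> first | omega | norm_num
    rw [h0]
    split_ifs <;> norm_num

lemma LCseq_step {g : ℤ → ℝ} (hg : LCseq g) {a : ℝ} (ha0 : 0 ≤ a) (ha1 : a ≤ 1) :
    LCseq (fun k => a * g (k-1) + (1-a) * g k) := by
  obtain ⟨hpos, hinv⟩ := hg
  constructor
  · intro k
    have h1 := hpos (k-1); have h2 := hpos k
    dsimp only; nlinarith
  · intro k l hkl
    dsimp only
    have h1 := hinv (k-1) (l-1) (by omega)
    rw [show (k-1-1 : ℤ) = k-2 by ring, show (l-1+1 : ℤ) = l by ring] at h1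
    have h2 := hinv k l hkl
    have h3 : g (k-2) * g (l+1) ≤ g k * g (l-1) := by
      have h3a := hinv (k-1) l (by omega)
      rw [show (k-1-1 : ℤ) = k-2 by ring] at h3a
      rcases eq_or_lt_of_le hkl with rfl | hlt
      · nlinarith [mul_comm (g (k-1)) (g k)]
      · have h3b := hinv k (l-1) (by omega)
        rw [show (l-1+1 : ℤ) = l by ring] at h3b
        linarith
    rw [show (l+1-1 : ℤ) = l by ring, show (k-1-1 : ℤ) = k-2 by ring]
    have haa : (0:ℝ) ≤ a * a := mul_nonneg ha0 ha0
    have hbb : (0:ℝ) ≤ (1-a) * (1-a) := mul_nonneg (by linarith) (by linarith)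
    have hab : (0:ℝ) ≤ a * (1-a) := mul_nonneg ha0 (by linarith)
    nlinarith [mul_le_mul_of_nonneg_left h1 haa, mul_le_mul_of_nonneg_left h2 hbb,
      mul_le_mul_of_nonneg_left h3 hab]

lemma bsp_LC (p : ℕ → ℝ) : ∀ (I : Finset ℕ), (∀ i ∈ I, 0 ≤ p i ∧ p i ≤ 1) →
    LCseq (bernoulliSumPMF I p) := by
  intro I
  induction I using Finset.induction_on with
  | empty =>
    intro _
    have h : bernoulliSumPMF ∅ p = fun k => if k = 0 then (1:ℝ) else 0 := funext (bsp_empty p)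
    rw [h]; exact LCseq_delta
  | @insert a s ha ih =>
    intro hp
    have h : bernoulliSumPMF (insert a s) p
        = fun k => p a * bernoulliSumPMF s p (k-1) + (1 - p a) * bernoulliSumPMF s p k :=
      funext (bsp_rec s p a ha)
    rw [h]
    exact LCseq_step (ih fun i hi => hp i (mem_insert_of_mem hi))
      (hp a (mem_insert_self a s)).1 (hp a (mem_insert_self a s)).2

lemma pair_sum (n : ℕ) (F : ℕ → ℕ → ℝ) (hdiag : ∀ i, F i i = 0) :
    ∑ i ∈ range n, ∑ j ∈ range n, F i j = ∑ i ∈ range n, ∑ j ∈ Ioo i n, (F i j + F j i) := by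
  have hsplit : ∀ i ∈ range n, ∑ j ∈ range n, F i j
      = (∑ j ∈ range i, F i j) + ∑ j ∈ Ioo i n, F i j := by
    intro i hi
    have hin : i < n := mem_range.mp hi
    rw [range_eq_Ico, ← sum_Ico_consecutive (fun j => F i j) (Nat.zero_le i) hin.le,
        ← Ioo_insert_left hin, sum_insert left_notMem_Ioo, hdiag, zero_add, ← range_eq_Ico]
  rw [sum_congr rfl hsplit, sum_add_distrib]
  have htri : ∑ i ∈ range n, ∑ j ∈ range i, F i j = ∑ j ∈ range n, ∑ i ∈ Ioo j n, F i j := by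
    refine sum_comm' ?_
    intro x y
    simp only [mem_range, mem_Ioo]
    omega
  rw [htri, ← sum_add_distrib]
  refine sum_congr rfl fun i _ => ?_
  rw [← sum_add_distrib]
  exact sum_congr rfl fun j _ => add_comm _ _

theorem shepp_olkin_glc_identity (n : ℕ) (p p' : ℕ → ℝ)
    (hp : ∀ i ∈ Finset.range n, 0 ≤ p i ∧ p i ≤ 1)
    (hp' : ∀ i ∈ Finset.range n, 0 ≤ p' i)
    (f' : ℕ → ℤ → ℝ)
    (hf' : ∀ i ∈ Finset.range n, ∀ k, f' i k = bernoulliSumPMF (Finset.range n \ {i}) p k)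
    (f'' : ℕ → ℕ → ℤ → ℝ)
    (hf'' : ∀ i ∈ Finset.range n, ∀ j ∈ Finset.range n, i ≠ j →
      ∀ k, f'' i j k = bernoulliSumPMF ((Finset.range n \ {i}) \ {j}) p k)
    (k : ℤ) :
    ((∑ i ∈ Finset.range n, p' i * p i * f' i k) *
        (∑ i ∈ Finset.range n, p' i * (1 - p i) * f' i (k + 1))
      - (∑ i ∈ Finset.range n, p' i * (1 - p i) * f' i k) *
        (∑ i ∈ Finset.range n, p' i * p i * f' i (k + 1))
      = ∑ i ∈ Finset.range n, ∑ j ∈ Finset.Ioo i n,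
          p' i * p' j * (p i - p j) ^ 2 *
            (f'' i j k ^ 2 - f'' i j (k - 1) * f'' i j (k + 1))) ∧
    0 ≤ (∑ i ∈ Finset.range n, p' i * p i * f' i k) *
          (∑ i ∈ Finset.range n, p' i * (1 - p i) * f' i (k + 1))
        - (∑ i ∈ Finset.range n, p' i * (1 - p i) * f' i k) *
          (∑ i ∈ Finset.range n, p' i * p i * f' i (k + 1)) := by
  set F : ℕ → ℕ → ℝ := fun i j =>
    p' i * p i * f' i k * (p' j * (1 - p j) * f' j (k + 1))
      - p' i * (1 - p i) * f' i k * (p' j * p j * f' j (k + 1)) with hF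
  have hdiag : ∀ i, F i i = 0 := by intro i; rw [hF]; ring
  have hlhs : (∑ i ∈ Finset.range n, p' i * p i * f' i k) *
        (∑ i ∈ Finset.range n, p' i * (1 - p i) * f' i (k + 1))
      - (∑ i ∈ Finset.range n, p' i * (1 - p i) * f' i k) *
        (∑ i ∈ Finset.range n, p' i * p i * f' i (k + 1))
      = ∑ i ∈ Finset.range n, ∑ j ∈ Finset.range n, F i j := by
    rw [Finset.sum_mul_sum, Finset.sum_mul_sum, ← Finset.sum_sub_distrib]
    exact Finset.sum_congr rfl fun i _ => (Finset.sum_sub_distrib _ _).symm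
  have key : ∀ i ∈ Finset.range n, ∀ j ∈ Finset.Ioo i n,
      F i j + F j i = p' i * p' j * (p i - p j) ^ 2 *
        (f'' i j k ^ 2 - f'' i j (k - 1) * f'' i j (k + 1)) := by
    intro i hi j hj
    have hin : i < n := Finset.mem_range.mp hi
    have hij : i < j := (Finset.mem_Ioo.mp hj).1
    have hjn : j < n := (Finset.mem_Ioo.mp hj).2
    have hjr : j ∈ Finset.range n := Finset.mem_range.mpr hjn
    have hne : i ≠ j := Nat.ne_of_lt hij
    set g : ℤ → ℝ := f'' i j with hg
    have hA : ∀ m, f' i m = p j * g (m - 1) + (1 - p j) * g m := by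
      intro m
      have hj' : j ∈ Finset.range n \ {i} := by
        simp only [Finset.mem_sdiff, Finset.mem_range, Finset.mem_singleton]
        exact ⟨hjn, fun h => hne h.symm⟩
      have hrw : Finset.range n \ {i} = insert j ((Finset.range n \ {i}) \ {j}) := by
        ext x
        simp only [Finset.mem_insert, Finset.mem_sdiff, Finset.mem_range, Finset.mem_singleton]
        omega
      rw [hf' i hi m, hrw, bsp_rec _ p j (by simp), ← hf'' i hi j hjr hne (m-1),
        ← hf'' i hi j hjr hne m]
    have hB : ∀ m, f' j m = p i * g (m - 1) + (1 - p i) * g m := by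
      intro m
      have hcomm : (Finset.range n \ {j}) \ {i} = (Finset.range n \ {i}) \ {j} := by
        ext x; simp only [Finset.mem_sdiff]; tauto
      have hi' : i ∈ Finset.range n \ {j} := by
        simp only [Finset.mem_sdiff, Finset.mem_range, Finset.mem_singleton]
        exact ⟨hin, hne⟩
      have hrw : Finset.range n \ {j} = insert i ((Finset.range n \ {j}) \ {i}) := by
        ext x
        simp only [Finset.mem_insert, Finset.mem_sdiff, Finset.mem_range, Finset.mem_singleton]
        omega
      rw [hf' j hjr m, hrw, bsp_rec _ p i (by simp), hcomm, ← hf'' i hi j hjr hne (m-1),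
        ← hf'' i hi j hjr hne m]
    rw [hF]
    dsimp only
    rw [hA k, hA (k+1), hB k, hB (k+1), show (k+1-1 : ℤ) = k by ring]
    ring
  have hid : (∑ i ∈ Finset.range n, p' i * p i * f' i k) *
        (∑ i ∈ Finset.range n, p' i * (1 - p i) * f' i (k + 1))
      - (∑ i ∈ Finset.range n, p' i * (1 - p i) * f' i k) *
        (∑ i ∈ Finset.range n, p' i * p i * f' i (k + 1))
      = ∑ i ∈ Finset.range n, ∑ j ∈ Finset.Ioo i n,
          p' i * p' j * (p i - p j) ^ 2 *
            (f'' i j k ^ 2 - f'' i j (k - 1) * f'' i j (k + 1)) := by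
    rw [hlhs, pair_sum n F hdiag]
    exact Finset.sum_congr rfl fun i hi => Finset.sum_congr rfl fun j hj => key i hi j hj
  refine ⟨hid, ?_⟩
  rw [hid]
  refine Finset.sum_nonneg fun i hi => Finset.sum_nonneg fun j hj => ?_
  have hin : i < n := Finset.mem_range.mp hi
  have hij : i < j := (Finset.mem_Ioo.mp hj).1
  have hjn : j < n := (Finset.mem_Ioo.mp hj).2
  have hjr : j ∈ Finset.range n := Finset.mem_range.mpr hjn
  have hne : i ≠ j := Nat.ne_of_lt hij
  have hLC : LCseq (bernoulliSumPMF ((Finset.range n \ {i}) \ {j}) p) := by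
    apply bsp_LC
    intro x hx
    exact hp x (Finset.mem_sdiff.mp (Finset.mem_sdiff.mp hx).1).1
  have hlc := hLC.2 k k le_rfl
  have hgk : f'' i j k = bernoulliSumPMF ((Finset.range n \ {i}) \ {j}) p k :=
    hf'' i hi j hjr hne k
  have hgk1 : f'' i j (k-1) = bernoulliSumPMF ((Finset.range n \ {i}) \ {j}) p (k-1) :=
    hf'' i hi j hjr hne (k-1)
  have hgk2 : f'' i j (k+1) = bernoulliSumPMF ((Finset.range n \ {i}) \ {j}) p (k+1) :=
    hf'' i hi j hjr hne (k+1)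
  have h1 : 0 ≤ f'' i j k ^ 2 - f'' i j (k-1) * f'' i j (k+1) := by
    rw [hgk, hgk1, hgk2, sq]
    linarith
  have h2 := hp' i hi
  have h3 := hp' j hjr
  positivity
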